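/- arXiv:2508.17177 — 3 statements merged into one kernel-verified Lean document; each statement's English description precedes it below -/
import Mathlib

section
/- For every welfare-maximizing RPR Z, every set F ⊆ F_S of positional scoring rules, every profile σ, and every k ∈ ℤ_+, Z(F, Shuffle_{[2,m]}^k(σ)) = F. Consequently, if m ≥ 3 then every welfare-maximizing RPR fails plurality-shuffling consistency. -/
open scoped Classical

noncomputable section

/-- A strict ranking of the alternatives `A` among `m` positions: each alternative is
assigned its (0-indexed) position. -/
abbrev Ranking (A : Type*) (m : ℕ) := A ≃ Fin m

/-- A weak ranking: a complete and transitive binary relation (ties allowed).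
`ge a b` means `a` is ranked weakly above `b`. -/
structure WeakRanking (A : Type*) where
  ge : A → A → Prop
  total : ∀ a b, ge a b ∨ ge b a
  trans : ∀ a b c, ge a b → ge b c → ge a c

namespace WeakRanking

variable {A : Type*}

/-- `a` is ranked strictly above `b`. -/
def strict (r : WeakRanking A) (a b : A) : Prop := r.ge a b ∧ ¬ r.ge b a

/-- `a` and `b` are tied. -/
def tied (r : WeakRanking A) (a b : A) : Prop := r.ge a b ∧ r.ge b a

/-- The reversed weak ranking. -/
def rev (r : WeakRanking A) : WeakRanking A where
  ge a b := r.ge b a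
  total a b := r.total b a
  trans _ _ _ h1 h2 := r.trans _ _ _ h2 h1

/-- The all-tied weak ranking. -/
def allTied (A : Type*) : WeakRanking A :=
  ⟨fun _ _ => True, fun _ _ => Or.inl trivial, fun _ _ _ _ _ => trivial⟩

end WeakRanking

variable {A : Type*} {m : ℕ}

/-- The weak ranking induced by a strict ranking (smaller position = ranked higher). -/
def Ranking.toWeak (r : Ranking A m) : WeakRanking A where
  ge a b := r a ≤ r b
  total a b := le_total _ _
  trans _ _ _ h1 h2 := le_trans h1 h2

/-- The position-reversal permutation. -/
def finRevPerm (m : ℕ) : Equiv.Perm (Fin m) :=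
  ⟨Fin.rev, Fin.rev, Fin.rev_rev, Fin.rev_rev⟩

/-- The reversed strict ranking. -/
def Ranking.revR (r : Ranking A m) : Ranking A m := r.trans (finRevPerm m)

/-- Kendall-Tau distance with ties between two weak rankings: the sum over unordered pairs
of distinct alternatives of `D + T/2`, realized as half the sum over ordered pairs. -/
def KT [Fintype A] (r1 r2 : WeakRanking A) : ℝ :=
  (∑ p ∈ Finset.univ.offDiag,
      ((if (r1.strict p.1 p.2 ∧ r2.strict p.2 p.1) ∨ (r1.strict p.2 p.1 ∧ r2.strict p.1 p.2)
          then (1 : ℝ) else 0)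
        + (if r1.tied p.1 p.2 ∨ r2.tied p.1 p.2 then (1 : ℝ) else 0) / 2)) / 2

/-- A profile: the list of the voters' strict rankings. -/
abbrev Profile (A : Type*) (m : ℕ) := List (Ranking A m)

/-- A social welfare function. -/
abbrev SWF (A : Type*) (m : ℕ) := Profile A m → WeakRanking A

/-- Reverse every voter's ranking. -/
def revProfile (σ : Profile A m) : Profile A m := σ.map Ranking.revR

/-- A monotone positional scoring vector `1 = s₁ ≥ s₂ ≥ … ≥ sₘ = 0`. -/
structure ScoreVec (m : ℕ) where
  s : Fin m → ℝ
  anti : Antitone s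
  first : ∀ h : 0 < m, s ⟨0, h⟩ = 1
  last : ∀ h : 0 < m, s ⟨m - 1, Nat.sub_lt h Nat.one_pos⟩ = 0

/-- Total score of alternative `a` in profile `σ`. -/
def totalScore (sv : ScoreVec m) (σ : Profile A m) (a : A) : ℝ :=
  (σ.map fun r => sv.s (r a)).sum

/-- The positional scoring rule associated to a scoring vector. -/
def posSWF (sv : ScoreVec m) : SWF A m := fun σ =>
  { ge := fun a b => totalScore sv σ b ≤ totalScore sv σ a
    total := fun _ _ => le_total _ _
    trans := fun _ _ _ h1 h2 => le_trans h2 h1 }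

/-- The plurality scoring vector `(1,0,…,0)`. -/
def pluralityVec (m : ℕ) (hm : 2 ≤ m) : ScoreVec m where
  s i := if i.val = 0 then 1 else 0
  anti := by
    intro i j hij
    have h' : i.val ≤ j.val := hij
    dsimp only
    by_cases hj : j.val = 0
    · have hi : i.val = 0 := by omega
      simp [hi, hj]
    · by_cases hi : i.val = 0 <;> simp [hi, hj]
  first h := by simp
  last h := by
    have h' : m - 1 ≠ 0 := by omega
    simp [h']

/-- The veto scoring vector `(1,…,1,0)`. -/
def vetoVec (m : ℕ) (hm : 2 ≤ m) : ScoreVec m where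
  s i := if i.val = m - 1 then 0 else 1
  anti := by
    intro i j hij
    have h' : i.val ≤ j.val := hij
    dsimp only
    by_cases hi : i.val = m - 1
    · have hj : j.val = m - 1 := by have := j.isLt; omega
      simp [hi, hj]
    · by_cases hj : j.val = m - 1 <;> simp [hi, hj]
  first h := by
    have h' : (0 : ℕ) ≠ m - 1 := by omega
    simp [h']
  last h := by simp

/-- The reverse scoring vector, `s'_j = 1 - s_{m+1-j}`. -/
def ScoreVec.revVec (sv : ScoreVec m) : ScoreVec m where
  s j := 1 - sv.s j.rev
  anti := by
    intro i j hij
    have h1 : j.rev ≤ i.rev := by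
      simp only [Fin.le_def, Fin.val_rev]
      have h' : i.val ≤ j.val := hij
      omega
    have h2 := sv.anti h1
    dsimp only
    linarith
  first h := by
    have h1 : (⟨0, h⟩ : Fin m).rev = ⟨m - 1, Nat.sub_lt h Nat.one_pos⟩ := by
      ext
      simp [Fin.val_rev]
    try dsimp only
    rw [h1, sv.last h]
    ring
  last h := by
    have h1 : (⟨m - 1, Nat.sub_lt h Nat.one_pos⟩ : Fin m).rev = ⟨0, h⟩ := by
      ext
      simp only [Fin.val_rev]
      omega
    try dsimp only
    rw [h1, sv.first h]
    ring

/-- One side of the split of the profile `σ` given by assignment `β`. -/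
def subProfile (σ : Profile A m) (β : Fin σ.length → Bool) (b : Bool) : Profile A m :=
  ((List.finRange σ.length).filter fun i => β i == b).map σ.get

/-- Apply an SWF, producing the all-tied ranking on an empty (sub)profile. -/
def applySplit (f : SWF A m) (σ : Profile A m) : WeakRanking A :=
  if σ = [] then WeakRanking.allTied A else f σ

/-- Expected Kendall-Tau disagreement of `f` between the two sides of a uniformly random
split of `σ` (each voter placed independently and uniformly on one of the two sides). -/
def expDisagree [Fintype A] (f : SWF A m) (σ : Profile A m) : ℝ :=
  (∑ β : Fin σ.length → Bool,
      KT (applySplit f (subProfile σ β true)) (applySplit f (subProfile σ β false)))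
    / 2 ^ σ.length

/-- Aggregation by Consistency over a set of SWFs: the rules minimizing expected
disagreement across a random split. -/
def AbC [Fintype A] (F : Set (SWF A m)) (σ : Profile A m) : Set (SWF A m) :=
  {f | f ∈ F ∧ ∀ g ∈ F, expDisagree f σ ≤ expDisagree g σ}

/-- Aggregation by Consistency over a set of positional scoring vectors. -/
def AbCVec [Fintype A] (F : Set (ScoreVec m)) (σ : Profile A m) : Set (ScoreVec m) :=
  {sv | sv ∈ F ∧ ∀ sv' ∈ F, expDisagree (posSWF sv) σ ≤ expDisagree (posSWF sv') σ}

/-- All permutations of the positions that fix every position outside `S`. -/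
def permsOn (S : Finset (Fin m)) : List (Equiv.Perm (Fin m)) :=
  (Finset.univ.filter fun π : Equiv.Perm (Fin m) => ∀ i ∉ S, π i = i).toList

/-- The `k`-shuffling of profile `σ` with respect to the set of positions `S`: each voter's
ranking is replaced by `k·m!` copies, split evenly among the `|S|!` permutations of `S`. -/
def shuffle (S : Finset (Fin m)) (k : ℕ) (σ : Profile A m) : Profile A m :=
  σ.flatMap fun r =>
    (permsOn S).flatMap fun π =>
      List.replicate (k * Nat.factorial m / Nat.factorial S.card) (r.trans π)

/-- The positions `2,…,m` (0-indexed: `1,…,m-1`). -/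
def tailPositions (m : ℕ) : Finset (Fin m) := Finset.univ.filter fun i => 1 ≤ i.val

/-- Number of voters ranking `a` first. -/
def topCount (σ : Profile A m) (a : A) : ℕ := σ.countP fun r => (r a).val == 0

/-- A weak ranking has no ties among distinct alternatives. -/
def NoTies (w : WeakRanking A) : Prop := ∀ a b : A, a ≠ b → ¬ w.tied a b

/-- Probability (over a uniformly random split of `σ`) that the outputs of `f` on the two
sides order `a` and `b` strictly oppositely. -/
def probD [Fintype A] (f : SWF A m) (σ : Profile A m) (a b : A) : ℝ :=
  ((Finset.univ.filter fun β : Fin σ.length → Bool =>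
      ((applySplit f (subProfile σ β true)).strict a b ∧
        (applySplit f (subProfile σ β false)).strict b a) ∨
      ((applySplit f (subProfile σ β true)).strict b a ∧
        (applySplit f (subProfile σ β false)).strict a b)).card : ℝ) / 2 ^ σ.length

/-- Probability (over a uniformly random split of `σ`) that `a` and `b` are tied in the
output of `f` on at least one side. -/
def probT [Fintype A] (f : SWF A m) (σ : Profile A m) (a b : A) : ℝ :=
  ((Finset.univ.filter fun β : Fin σ.length → Bool =>
      (applySplit f (subProfile σ β true)).tied a b ∨
      (applySplit f (subProfile σ β false)).tied a b).card : ℝ) / 2 ^ σ.length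

/-- A rule picking rule over sets of positional scoring vectors. -/
abbrev RPRVec (A : Type*) (m : ℕ) := Set (ScoreVec m) → Profile A m → Set (ScoreVec m)

/-- An RPR returns a nonempty subset of the candidate rules. -/
def IsRPR (Z : RPRVec A m) : Prop := ∀ F σ, Z F σ ⊆ F ∧ (Z F σ).Nonempty

/-- Anonymity of an RPR: invariance under permuting voters. -/
def AnonymousRPR (Z : RPRVec A m) : Prop :=
  ∀ (F : Set (ScoreVec m)) (σ σ' : Profile A m), σ.Perm σ' → Z F σ = Z F σ'

/-- Reversal symmetry of an RPR. -/
def ReversalSymmetric (Z : RPRVec A m) : Prop :=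
  ∀ F : Set (ScoreVec m), ScoreVec.revVec '' F = F →
    ∀ σ : Profile A m, ScoreVec.revVec '' (Z F σ) = Z F (revProfile σ)

/-- Plurality-shuffling consistency of an RPR. -/
def PSConsistent (hm : 2 ≤ m) (Z : RPRVec A m) : Prop :=
  ∀ F : Set (ScoreVec m), F.Finite → pluralityVec m hm ∈ F →
    ∀ σ : Profile A m, NoTies (posSWF (pluralityVec m hm) σ) →
      ∃ k : ℕ, 1 ≤ k ∧ ∀ k', k ≤ k' →
        Z F (shuffle (tailPositions m) k' σ) = {pluralityVec m hm}

/-- Union consistency of an RPR. -/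
def UnionConsistent (Z : RPRVec A m) : Prop :=
  ∀ (F : Set (ScoreVec m)) (σa σb : Profile A m), (Z F σa ∩ Z F σb).Nonempty →
    Z F (σa ++ σb) = Z F σa ∩ Z F σb

/-- The welfare-maximizing RPR with utility function `u`. -/
def welfareMax (u : Ranking A m → WeakRanking A → ℝ) : RPRVec A m := fun F σ =>
  {sv | sv ∈ F ∧ ∀ sv' ∈ F,
      (σ.map fun r => u r (posSWF sv' σ)).sum ≤ (σ.map fun r => u r (posSWF sv σ)).sum}

/-- The SWF induced by a (vector-valued) RPR, where it is singleton-valued. -/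
def inducedVec (Z : RPRVec A m) (F : Set (ScoreVec m)) : SWF A m := fun σ =>
  if h : ∃ sv, Z F σ = {sv} then posSWF h.choose σ else WeakRanking.allTied A

/-- The SWF induced by an (SWF-valued) RPR, where it is singleton-valued. -/
def inducedSWF (Z : Set (SWF A m) → Profile A m → Set (SWF A m)) (F : Set (SWF A m)) :
    SWF A m := fun σ =>
  if h : ∃ f, Z F σ = {f} then h.choose σ else WeakRanking.allTied A

/-- The SWF induced by AbC over scoring vectors. -/
def inducedAbCVec [Fintype A] (F : Set (ScoreVec m)) : SWF A m := fun σ =>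
  if h : ∃ sv, AbCVec F σ = {sv} then posSWF h.choose σ else WeakRanking.allTied A

/-- Anonymity of an SWF. -/
def AnonymousSWF (f : SWF A m) : Prop :=
  ∀ σ σ' : Profile A m, σ.Perm σ' → f σ = f σ'

/-- Relabeling of a weak ranking along a permutation of the alternatives. -/
def permuteWeak (π : Equiv.Perm A) (w : WeakRanking A) : WeakRanking A where
  ge a b := w.ge (π.symm a) (π.symm b)
  total a b := w.total _ _
  trans _ _ _ h1 h2 := w.trans _ _ _ h1 h2

/-- Neutrality of an SWF: permuting the alternatives permutes the output accordingly. -/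
def NeutralSWF (f : SWF A m) : Prop :=
  ∀ (π : Equiv.Perm A) (σ : Profile A m),
    f (σ.map fun r => π.symm.trans r) = permuteWeak π (f σ)

/-- `a` pairwise defeats `b` in profile `σ`. -/
def pairwiseDefeats (σ : Profile A m) (a b : A) : Prop :=
  (σ.countP fun r => decide (r b < r a)) < (σ.countP fun r => decide (r a < r b))

/-- A set `S` is dominant if every member pairwise defeats every non-member. -/
def DominantSet [Fintype A] (σ : Profile A m) (S : Finset A) : Prop :=
  ∀ a ∈ S, ∀ b ∉ S, pairwiseDefeats σ a b

/-- The Smith set: the smallest dominant set (the intersection of all dominant sets). -/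
def SmithSet [Fintype A] (σ : Profile A m) : Finset A :=
  Finset.univ.filter fun a => ∀ S : Finset A, DominantSet σ S → a ∈ S

/-- `a` is among the top-ranked alternatives of `w`. -/
def isTop (w : WeakRanking A) (a : A) : Prop := ∀ b, w.ge a b

def SmithCriterion [Fintype A] (f : SWF A m) : Prop :=
  ∀ (σ : Profile A m) (a : A), isTop (f σ) a → a ∈ SmithSet σ

def CondorcetConsistent [Fintype A] (f : SWF A m) : Prop :=
  ∀ (σ : Profile A m) (c : A), SmithSet σ = {c} →
    ∀ a, isTop (f σ) a → a ∈ SmithSet σ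

def MajorityWinnerCriterion [Fintype A] (f : SWF A m) : Prop :=
  ∀ (σ : Profile A m) (c : A), SmithSet σ = {c} → σ.length < 2 * topCount σ c →
    ∀ a, isTop (f σ) a → a ∈ SmithSet σ

def PairwiseMajorityConsistent (f : SWF A m) : Prop :=
  ∀ (σ : Profile A m) (r : WeakRanking A),
    (∀ a b, r.strict a b ↔ pairwiseDefeats σ a b) → f σ = r

def UnanimousSWF (f : SWF A m) : Prop :=
  ∀ (σ : Profile A m) (r : Ranking A m), σ ≠ [] → (∀ x ∈ σ, x = r) →
    f σ = Ranking.toWeak r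

/-- Rank of `a` in weak ranking `w`: one plus the number of alternatives strictly above. -/
def rankIn [Fintype A] (w : WeakRanking A) (a : A) : ℕ :=
  1 + (Finset.univ.filter fun b => w.strict b a).card

/-- `r'` is obtained from `r` by (weakly) raising `a`, everything else unchanged. -/
def RaisesWeak (a : A) (r r' : Ranking A m) : Prop :=
  r' a ≤ r a ∧ ∀ b c : A, b ≠ a → c ≠ a → (r b < r c ↔ r' b < r' c)

/-- Monotonicity of an SWF: raising an alternative never hurts its rank. -/
def MonotonicSWF [Fintype A] (f : SWF A m) : Prop :=
  ∀ (a : A) (σ σ' : Profile A m), List.Forall₂ (RaisesWeak a) σ σ' →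
    rankIn (f σ') a ≤ rankIn (f σ) a

/-- Total score of `a` for a list of (position ↦ alternative) ballots of length `ℓ`. -/
def ballotScore [Fintype A] {ℓ : ℕ} (sv : ScoreVec ℓ) (P : List (Fin ℓ → A)) (a : A) : ℝ :=
  (P.map fun b => ∑ i : Fin ℓ, if b i = a then sv.s i else 0).sum

/-- A scoring vector achieves perfect consistency on the given split `(P1, P2)`. -/
def PerfectConsistency [Fintype A] {ℓ : ℕ} (sv : ScoreVec ℓ)
    (P1 P2 : List (Fin ℓ → A)) : Prop :=
  ∀ a b : A, a ≠ b →
    0 < (ballotScore sv P1 a - ballotScore sv P1 b) *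
        (ballotScore sv P2 a - ballotScore sv P2 b)

/-- Complete a `k`-partial ballot to a full ballot on `m` positions by placing the missing
alternatives at the bottom, in a fixed order. -/
def completeBallot [Fintype A] [LinearOrder A] {k m : ℕ} (hk : 0 < k)
    (b : Fin k → A) : Fin m → A := fun j =>
  if h : j.val < k then b ⟨j.val, h⟩
  else ((Finset.univ \ Finset.univ.image b).sort (· ≤ ·)).getD (j.val - k) (b ⟨0, hk⟩)

/-- `k`-shuffling for (position ↦ alternative) ballots. -/
def shuffleBallots {m : ℕ} (S : Finset (Fin m)) (k : ℕ) (P : List (Fin m → A)) :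
    List (Fin m → A) :=
  P.flatMap fun f =>
    (permsOn S).flatMap fun π =>
      List.replicate (k * Nat.factorial m / Nat.factorial S.card) (f ∘ π.symm)


/-! ### Auxiliary material for Statement 4 -/

lemma WeakRanking.ext' {A : Type*} {r1 r2 : WeakRanking A} (h : r1.ge = r2.ge) : r1 = r2 := by
  cases r1; cases r2; cases h; rfl

/-- The finset of permutations fixing every position outside `S`. -/
def permSet {m : ℕ} (S : Finset (Fin m)) : Finset (Equiv.Perm (Fin m)) :=
  Finset.univ.filter fun π => ∀ i ∉ S, π i = i

lemma permsOn_eq {m : ℕ} (S : Finset (Fin m)) : permsOn S = (permSet S).toList := rfl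

lemma mem_permSet {m : ℕ} {S : Finset (Fin m)} {π : Equiv.Perm (Fin m)} :
    π ∈ permSet S ↔ ∀ i ∉ S, π i = i := by simp [permSet]

lemma sum_permSet_swap {m : ℕ} (S : Finset (Fin m)) (f : Fin m → ℝ) {p q : Fin m}
    (hp : p ∈ S) (hq : q ∈ S) :
    ∑ π ∈ permSet S, f (π p) = ∑ π ∈ permSet S, f (π q) := by
  have hmem : ∀ π ∈ permSet S, (Equiv.swap p q).trans π ∈ permSet S := by
    intro π hπ
    rw [mem_permSet] at hπ ⊢
    intro i hi
    have hip : i ≠ p := fun h => hi (h ▸ hp)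
    have hiq : i ≠ q := fun h => hi (h ▸ hq)
    simp [Equiv.trans_apply, Equiv.swap_apply_of_ne_of_ne hip hiq, hπ i hi]
  refine Finset.sum_bij' (fun π _ => (Equiv.swap p q).trans π)
    (fun π _ => (Equiv.swap p q).trans π) (fun π hπ => hmem π hπ) (fun π hπ => hmem π hπ)
    ?_ ?_ ?_
  · intro π _; ext x; simp [Equiv.trans_apply]
  · intro π _; ext x; simp [Equiv.trans_apply]
  · intro π _; simp [Equiv.trans_apply, Equiv.swap_apply_left]

/-- The value `Σ_{π} s(π(1))` used below. -/
def GG {m : ℕ} (h1 : 1 < m) (sv : ScoreVec m) : ℝ :=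
  ∑ π ∈ permSet (tailPositions m), sv.s (π ⟨1, h1⟩)

lemma mem_tailPositions {m : ℕ} {i : Fin m} : i ∈ tailPositions m ↔ 1 ≤ i.val := by
  simp [tailPositions]

lemma gval {m : ℕ} (h1 : 1 < m) (sv : ScoreVec m) (p : Fin m) :
    ∑ π ∈ permSet (tailPositions m), sv.s (π p)
      = if p.val = 0 then ((permSet (tailPositions m)).card : ℝ) else GG h1 sv := by
  by_cases hp : p.val = 0
  · have h0 : 0 < m := by omega
    have hp0 : p = ⟨0, h0⟩ := Fin.ext hp
    have hfix : ∀ π ∈ permSet (tailPositions m), π p = p := by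
      intro π hπ
      exact (mem_permSet.mp hπ) p (by simp [mem_tailPositions, hp])
    rw [if_pos hp]
    calc ∑ π ∈ permSet (tailPositions m), sv.s (π p)
        = ∑ _π ∈ permSet (tailPositions m), sv.s p :=
          Finset.sum_congr rfl fun π hπ => by rw [hfix π hπ]
      _ = ((permSet (tailPositions m)).card : ℝ) := by
          rw [Finset.sum_const, nsmul_eq_mul, hp0, sv.first h0, mul_one]
  · rw [if_neg hp]
    show _ = ∑ π ∈ permSet (tailPositions m), sv.s (π ⟨1, h1⟩)
    exact sum_permSet_swap _ _ (mem_tailPositions.mpr (by omega))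
      (mem_tailPositions.mpr (by simp))

lemma GG_lt_card {m : ℕ} (h1 : 1 < m) (sv : ScoreVec m) :
    GG h1 sv < ((permSet (tailPositions m)).card : ℝ) := by
  have h0 : 0 < m := by omega
  have hcard : ((permSet (tailPositions m)).card : ℝ)
      = ∑ _π ∈ permSet (tailPositions m), (1 : ℝ) := by
    rw [Finset.sum_const, nsmul_eq_mul, mul_one]
  rw [hcard, GG]
  have hle1 : ∀ q : Fin m, sv.s q ≤ 1 := by
    intro q
    have := sv.anti (show (⟨0, h0⟩ : Fin m) ≤ q from by simp [Fin.le_def])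
    rwa [sv.first h0] at this
  have hlast : m - 1 < m := Nat.sub_lt h0 Nat.one_pos
  set p1 : Fin m := ⟨1, h1⟩
  set pl : Fin m := ⟨m - 1, hlast⟩
  have hp1 : p1 ∈ tailPositions m := mem_tailPositions.mpr (by simp [p1])
  have hpl : pl ∈ tailPositions m := mem_tailPositions.mpr (by simp [pl]; omega)
  refine Finset.sum_lt_sum (fun π _ => hle1 _) ⟨Equiv.swap p1 pl, ?_, ?_⟩
  · rw [mem_permSet]
    intro i hi
    have hi0 : i.val = 0 := by
      by_contra h
      exact hi (mem_tailPositions.mpr (by omega))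
    have hip : i ≠ p1 := by simp [Fin.ext_iff, hi0, p1]
    have hiq : i ≠ pl := by simp [Fin.ext_iff, hi0, pl]; omega
    exact Equiv.swap_apply_of_ne_of_ne hip hiq
  · rw [Equiv.swap_apply_left]
    have : sv.s pl = 0 := sv.last h0
    rw [this]; norm_num

lemma topCount_cons {A : Type*} {m : ℕ} (r : Ranking A m) (σ : Profile A m) (a : A) :
    topCount (r :: σ) a = (if (r a).val = 0 then 1 else 0) + topCount σ a := by
  simp only [topCount, List.countP_cons]
  by_cases h : (r a).val = 0 <;> simp [h] <;> omega

lemma sum_flatMap_real {α : Type*} (l : List α) (f : α → List ℝ) :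
    (l.flatMap f).sum = (l.map fun x => (f x).sum).sum := by
  induction l with
  | nil => simp
  | cons a l ih => simp [List.flatMap_cons, ih]

lemma voterScore_shuffle {A : Type*} {m : ℕ} (h1 : 1 < m) (sv : ScoreVec m) (k : ℕ)
    (r : Ranking A m) (a : A) :
    ((((permsOn (tailPositions m)).flatMap fun π =>
        List.replicate (k * Nat.factorial m / Nat.factorial (tailPositions m).card)
          (r.trans π))).map fun r' => sv.s (r' a)).sum
      = (k * Nat.factorial m / Nat.factorial (tailPositions m).card : ℕ) *
          (if (r a).val = 0 then ((permSet (tailPositions m)).card : ℝ) else GG h1 sv) := by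
  set c := k * Nat.factorial m / Nat.factorial (tailPositions m).card with hc
  rw [List.map_flatMap, sum_flatMap_real]
  have hmap : ∀ π : Equiv.Perm (Fin m),
      ((List.replicate c (r.trans π)).map fun r' => sv.s (r' a)).sum
        = c * sv.s (π (r a)) := by
    intro π
    rw [List.map_replicate, List.sum_replicate, nsmul_eq_mul]
    rfl
  calc ((permsOn (tailPositions m)).map fun π =>
        (((List.replicate c (r.trans π)).map fun r' => sv.s (r' a))).sum).sum
      = ((permsOn (tailPositions m)).map fun π => (c : ℝ) * sv.s (π (r a))).sum := by
        exact congrArg List.sum (List.map_congr_left fun π _ => hmap π)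
    _ = ∑ π ∈ permSet (tailPositions m), (c : ℝ) * sv.s (π (r a)) := by
        rw [permsOn_eq, Finset.sum_map_toList]
    _ = (c : ℝ) * ∑ π ∈ permSet (tailPositions m), sv.s (π (r a)) := by
        rw [Finset.mul_sum]
    _ = _ := by rw [gval h1 sv (r a)]

lemma totalScore_shuffle {A : Type*} {m : ℕ} (h1 : 1 < m) (sv : ScoreVec m)
    (σ : Profile A m) (k : ℕ) (a : A) :
    totalScore sv (shuffle (tailPositions m) k σ) a
      = (k * Nat.factorial m / Nat.factorial (tailPositions m).card : ℕ) *
          ((topCount σ a : ℝ) * ((permSet (tailPositions m)).card : ℝ)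
            + ((σ.length : ℝ) - (topCount σ a : ℝ)) * GG h1 sv) := by
  induction σ with
  | nil => simp [totalScore, shuffle, topCount]
  | cons r σ ih =>
    rw [totalScore, shuffle, List.flatMap_cons, List.map_append, List.sum_append]
    rw [show ((σ.flatMap fun r => (permsOn (tailPositions m)).flatMap fun π =>
        List.replicate (k * Nat.factorial m / Nat.factorial (tailPositions m).card)
          (r.trans π)).map fun r' => sv.s (r' a)).sum
      = totalScore sv (shuffle (tailPositions m) k σ) a from rfl, ih,
      voterScore_shuffle h1 sv k r a]
    rw [topCount_cons]
    by_cases h : (r a).val = 0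
    · simp only [if_pos h, List.length_cons]
      push_cast
      ring
    · simp only [if_neg h, List.length_cons]
      push_cast
      ring

lemma tpc_pos {m : ℕ} (h0 : 0 < m) {k : ℕ} (hk : 1 ≤ k) :
    0 < k * Nat.factorial m / Nat.factorial (tailPositions m).card := by
  apply Nat.div_pos _ (Nat.factorial_pos _)
  calc Nat.factorial (tailPositions m).card ≤ Nat.factorial m :=
        Nat.factorial_le (le_trans (Finset.card_le_card (Finset.subset_univ _))
          (le_of_eq (by simp)))
    _ ≤ k * Nat.factorial m := Nat.le_mul_of_pos_left _ hk

lemma shuffle_ge_iff {A : Type*} {m : ℕ} (h1 : 1 < m) (sv : ScoreVec m)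
    (σ : Profile A m) {k : ℕ} (hk : 1 ≤ k) (a b : A) :
    (totalScore sv (shuffle (tailPositions m) k σ) b
      ≤ totalScore sv (shuffle (tailPositions m) k σ) a)
      ↔ topCount σ b ≤ topCount σ a := by
  rw [totalScore_shuffle h1, totalScore_shuffle h1]
  have hc : (0 : ℝ) < (k * Nat.factorial m / Nat.factorial (tailPositions m).card : ℕ) := by
    exact_mod_cast tpc_pos (by omega) hk
  have hNG := GG_lt_card h1 sv
  set c : ℝ := ((k * Nat.factorial m / Nat.factorial (tailPositions m).card : ℕ) : ℝ)
  set N : ℝ := ((permSet (tailPositions m)).card : ℝ)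
  set G : ℝ := GG h1 sv
  set ta : ℝ := (topCount σ a : ℝ)
  set tb : ℝ := (topCount σ b : ℝ)
  have hpos : 0 < c * (N - G) := mul_pos hc (sub_pos.mpr hNG)
  have hform : ∀ t : ℝ, c * (t * N + ((σ.length : ℝ) - t) * G)
      = c * (N - G) * t + c * ((σ.length : ℝ) * G) := fun t => by ring
  rw [hform, hform, add_le_add_iff_right, mul_le_mul_iff_right₀ hpos]
  exact Nat.cast_le

lemma posSWF_shuffle_eq {A : Type*} {m : ℕ} (h1 : 1 < m) (sv sv' : ScoreVec m)
    (σ : Profile A m) {k : ℕ} (hk : 1 ≤ k) :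
    (posSWF sv (shuffle (tailPositions m) k σ) : WeakRanking A)
      = posSWF sv' (shuffle (tailPositions m) k σ) := by
  apply WeakRanking.ext'
  funext a b
  apply propext
  show (totalScore sv (shuffle (tailPositions m) k σ) b
      ≤ totalScore sv (shuffle (tailPositions m) k σ) a) ↔ _
  rw [shuffle_ge_iff h1 sv σ hk a b]
  exact (shuffle_ge_iff h1 sv' σ hk a b).symm

lemma totalScore_plurality {A : Type*} {m : ℕ} (hm : 2 ≤ m) (σ : Profile A m) (a : A) :
    totalScore (pluralityVec m hm) σ a = (topCount σ a : ℝ) := by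
  induction σ with
  | nil => simp [totalScore, topCount]
  | cons r σ ih =>
    rw [totalScore] at ih ⊢
    rw [List.map_cons, List.sum_cons, ih, topCount_cons]
    show (if (r a).val = 0 then (1 : ℝ) else 0) + _ = _
    by_cases h : (r a).val = 0
    · simp only [if_pos h]; push_cast; ring
    · simp only [if_neg h]; push_cast; ring


/-- For every welfare-maximizing RPR `Z`, every set `F ⊆ F_S`, every profile
`σ`, and every `k ∈ ℤ₊`, `Z(F, Shuffle_{[2,m]}^k(σ)) = F`; consequently, if `m ≥ 3`, every
welfare-maximizing RPR fails plurality-shuffling consistency. -/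
theorem welfareMax_shuffle_and_fails_PSC {A : Type*} [Fintype A] {m : ℕ} (hm : 2 ≤ m)
    (hcard : Fintype.card A = m) :
    (∀ (u : Ranking A m → WeakRanking A → ℝ) (F : Set (ScoreVec m)) (σ : Profile A m)
        (k : ℕ), 1 ≤ k → welfareMax u F (shuffle (tailPositions m) k σ) = F) ∧
    (3 ≤ m → ∀ u : Ranking A m → WeakRanking A → ℝ, ¬ PSConsistent hm (welfareMax u)) := by
  have h1 : 1 < m := by omega
  have main : ∀ (u : Ranking A m → WeakRanking A → ℝ) (F : Set (ScoreVec m)) (σ : Profile A m)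
      (k : ℕ), 1 ≤ k → welfareMax u F (shuffle (tailPositions m) k σ) = F := by
    intro u F σ k hk
    ext sv
    simp only [welfareMax, Set.mem_setOf_eq]
    constructor
    · exact fun h => h.1
    · intro h
      refine ⟨h, fun sv' _ => ?_⟩
      rw [posSWF_shuffle_eq h1 sv' sv σ hk]
  refine ⟨main, ?_⟩
  intro hm3 u hPSC
  have h0 : 0 < m := by omega
  set e : A ≃ Fin m := Fintype.equivFinOfCardEq hcard with he
  set p0 : Fin m := ⟨0, h0⟩ with hp0
  set rr : Fin m → Ranking A m := fun i => e.trans (Equiv.swap p0 i) with hrr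
  set σ0 : Profile A m :=
    (List.finRange m).flatMap fun i => List.replicate (i.val + 1) (rr i) with hσ0
  have hiff : ∀ (a : A) (i : Fin m), ((rr i a).val = 0) ↔ i = e a := by
    intro a i
    constructor
    · intro h
      have hap : rr i a = p0 := Fin.ext (by simpa using h)
      have h2 : Equiv.swap p0 i (e a) = Equiv.swap p0 i i := by
        rw [Equiv.swap_apply_right]; exact hap
      exact ((Equiv.swap p0 i).injective h2).symm
    · intro h
      have : rr i a = p0 := by
        show Equiv.swap p0 i (e a) = p0
        rw [← h, Equiv.swap_apply_right]
      simp [this, hp0]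
  have htop : ∀ a : A, topCount σ0 a = (e a).val + 1 := by
    intro a
    rw [hσ0, topCount, List.countP_flatMap]
    have hcp : ∀ i : Fin m,
        (List.countP (fun r => (r a).val == 0) ∘ fun i => List.replicate (i.val + 1) (rr i)) i
          = if i = e a then i.val + 1 else 0 := by
      intro i
      simp only [Function.comp]
      rw [List.countP_replicate]
      by_cases hia : i = e a
      · rw [if_pos hia, if_pos (by simpa using (hiff a i).mpr hia)]
      · rw [if_neg hia, if_neg (by simpa using fun hh => hia ((hiff a i).mp hh))]
    rw [List.map_congr_left fun i _ => hcp i, ← Fin.sum_univ_def]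
    simp
  have hN : NoTies (posSWF (pluralityVec m hm) σ0) := by
    intro a b hab htied
    obtain ⟨hge1, hge2⟩ := htied
    have e1 : totalScore (pluralityVec m hm) σ0 b ≤ totalScore (pluralityVec m hm) σ0 a := hge1
    have e2 : totalScore (pluralityVec m hm) σ0 a ≤ totalScore (pluralityVec m hm) σ0 b := hge2
    rw [totalScore_plurality hm, totalScore_plurality hm] at e1 e2
    have : topCount σ0 a = topCount σ0 b := by exact_mod_cast le_antisymm e2 e1
    rw [htop a, htop b] at this
    exact hab (e.injective (Fin.ext (by omega)))
  set F : Set (ScoreVec m) := {pluralityVec m hm, vetoVec m hm} with hF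
  have hfin : F.Finite := (Set.finite_singleton _).insert _
  obtain ⟨k, hk1, hspec⟩ := hPSC F hfin (Set.mem_insert _ _) σ0 hN
  have heq := hspec k le_rfl
  rw [main u F σ0 k hk1] at heq
  have hveto : vetoVec m hm ∈ F := Set.mem_insert_iff.mpr (Or.inr rfl)
  rw [heq] at hveto
  have heq2 : vetoVec m hm = pluralityVec m hm := hveto
  have hval : (vetoVec m hm).s ⟨1, h1⟩ = (pluralityVec m hm).s ⟨1, h1⟩ := by rw [heq2]
  have hv : (vetoVec m hm).s ⟨1, h1⟩ = 1 := by
    have : (1 : ℕ) ≠ m - 1 := by omega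
    simp [vetoVec, this]
  have hp : (pluralityVec m hm).s ⟨1, h1⟩ = 0 := by
    simp [pluralityVec]
  rw [hv, hp] at hval
  norm_num at hval

end
end

section
/- Let σ be a profile on m ≥ 3 alternatives such that f_p(σ) has no ties, and suppose c ∈ A is ranked first by no voter (M_σ[c,1] = 0). Then for every positional scoring rule f ∈ F_S with f ≠ f_p, every alternative a ≠ c, and every k ∈ ℤ_+, writing σ_k = Shuffle_{[2,m]}^k(σ): P[D_f^{a,c}(σ_k) = 1] + (1/2)·P[T_f^{a,c}(σ_k) = 1] ≥ P[D_{f_p}^{a,c}(σ_k) = 1] + (1/2)·P[T_{f_p}^{a,c}(σ_k) = 1]. -/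
open scoped Classical

noncomputable section

variable {A : Type*} {m : ℕ}

/-! ### Auxiliary machinery for STATEMENT 7 -/

section Statement7Aux

/-- The "opposite strict orders" condition on the two score differences. -/
def eD (x y : ℝ) : Prop := (0 < x ∧ y < 0) ∨ (x < 0 ∧ 0 < y)

/-- The "tied on some side" condition on the two score differences. -/
def eT (x y : ℝ) : Prop := x = 0 ∨ y = 0

/-- The contribution `D + T/2` of a split to the disagreement. -/
noncomputable def eE (x y : ℝ) : ℝ :=
  (if eD x y then 1 else 0) + (if eT x y then 1 else 0) / 2

lemma eE_nonneg (x y : ℝ) : 0 ≤ eE x y := by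
  unfold eE; split_ifs <;> norm_num

lemma one_le_eE_of_D {x y : ℝ} (h : eD x y) : 1 ≤ eE x y := by
  unfold eE; rw [if_pos h]; split_ifs <;> norm_num

lemma half_le_eE_of_T {x y : ℝ} (h : eT x y) : 1/2 ≤ eE x y := by
  unfold eE; rw [if_pos h]; split_ifs <;> norm_num

lemma eE_le_half_of_not_D {x y : ℝ} (h : ¬ eD x y) : eE x y ≤ 1/2 := by
  unfold eE; rw [if_neg h]; split_ifs <;> norm_num

lemma eE_eq_zero_of_not {x y : ℝ} (h1 : ¬ eD x y) (h2 : ¬ eT x y) : eE x y = 0 := by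
  unfold eE; rw [if_neg h1, if_neg h2]; norm_num

lemma eE_comm (x y : ℝ) : eE x y = eE y x := by
  have h1 : eD x y ↔ eD y x := by unfold eD; tauto
  have h2 : eT x y ↔ eT y x := by unfold eT; tauto
  unfold eE; rw [if_congr h1 rfl rfl, if_congr h2 rfl rfl]

lemma eE_pair {Z u : ℝ} (hZ : 0 < Z) : 1 ≤ eE (Z + u) (-u) + eE (Z - u) u := by
  rcases lt_trichotomy u 0 with h | h | h
  · rcases lt_trichotomy (Z + u) 0 with h2 | h2 | h2
    · have hd : eD (Z + u) (-u) := Or.inr ⟨h2, by linarith⟩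
      have := one_le_eE_of_D hd; have := eE_nonneg (Z - u) u; linarith
    · have ht : eT (Z + u) (-u) := Or.inl h2
      have hd : eD (Z - u) u := Or.inl ⟨by linarith, h⟩
      have := half_le_eE_of_T ht; have := one_le_eE_of_D hd; linarith
    · have hd : eD (Z - u) u := Or.inl ⟨by linarith, h⟩
      have := one_le_eE_of_D hd; have := eE_nonneg (Z + u) (-u); linarith
  · subst h
    simp only [add_zero, sub_zero, neg_zero]
    have h2 : eT Z 0 := Or.inr rfl
    have := half_le_eE_of_T h2; linarith
  · rcases lt_trichotomy (Z - u) 0 with h2 | h2 | h2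
    · have hd : eD (Z - u) u := Or.inr ⟨h2, h⟩
      have := one_le_eE_of_D hd; have := eE_nonneg (Z + u) (-u); linarith
    · have ht : eT (Z - u) u := Or.inl h2
      have hd : eD (Z + u) (-u) := Or.inl ⟨by linarith, by linarith⟩
      have := half_le_eE_of_T ht; have := one_le_eE_of_D hd; linarith
    · have hd : eD (Z + u) (-u) := Or.inl ⟨by linarith, by linarith⟩
      have := one_le_eE_of_D hd; have := eE_nonneg (Z - u) u; linarith

/-- The abstract combinatorial core of the shuffle lemma. -/
lemma core_sum_le {n : ℕ} (dv : Fin n → ℝ) (Top : Finset (Fin n)) (φ : Fin n → Fin n)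
    (hinv : Function.Involutive φ)
    (hT : ∀ i ∈ Top, φ i ∈ Top ∧ dv (φ i) = dv i)
    (hN : ∀ i ∉ Top, φ i ∉ Top ∧ dv (φ i) = -dv i)
    (hZ : 0 < ∑ i ∈ Top, dv i) :
    ∑ β : Fin n → Bool, eE (∑ i, if β i = true then (if i ∈ Top then (1:ℝ) else 0) else 0)
        (∑ i, if β i = false then (if i ∈ Top then (1:ℝ) else 0) else 0)
      ≤ ∑ β : Fin n → Bool, eE (∑ i, if β i = true then dv i else 0)
        (∑ i, if β i = false then dv i else 0) := by
  set Z : ℝ := ∑ i ∈ Top, dv i with hZdef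
  have hcompl : ∑ i ∈ Topᶜ, dv i = 0 := by
    have h1 : ∑ i ∈ Topᶜ, dv i = ∑ i ∈ Topᶜ, -dv i := by
      refine Finset.sum_nbij' φ φ ?_ ?_ ?_ ?_ ?_
      · intro i hi; simp only [Finset.mem_compl] at hi ⊢; exact (hN i hi).1
      · intro i hi; simp only [Finset.mem_compl] at hi ⊢; exact (hN i hi).1
      · intro i _; exact hinv i
      · intro i _; exact hinv i
      · intro i hi; simp only [Finset.mem_compl] at hi
        rw [(hN i hi).2]; ring
    rw [Finset.sum_neg_distrib] at h1; linarith
  set F : (Fin n → Bool) → ℝ := fun β =>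
    eE (∑ i, if β i = true then dv i else 0) (∑ i, if β i = false then dv i else 0) with hF
  set G : (Fin n → Bool) → ℝ := fun β =>
    eE (∑ i, if β i = true then (if i ∈ Top then (1:ℝ) else 0) else 0)
      (∑ i, if β i = false then (if i ∈ Top then (1:ℝ) else 0) else 0) with hG
  set Φ : (Fin n → Bool) → (Fin n → Bool) := fun β i => β (φ i) with hΦdef
  have hΦ : Function.Involutive Φ := by
    intro β; funext i; simp only [hΦdef, hinv i]
  have hXp : ∀ (γ : Fin n → Bool) (b : Bool),
      (∑ i, if γ i = b then (if i ∈ Top then (1:ℝ) else 0) else 0)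
        = ∑ i ∈ Top, (if γ i = b then (1:ℝ) else 0) := by
    intro γ b
    calc (∑ i, if γ i = b then (if i ∈ Top then (1:ℝ) else 0) else 0)
        = ∑ i, if i ∈ Top then (if γ i = b then (1:ℝ) else 0) else 0 := by
          refine Finset.sum_congr rfl fun i _ => ?_
          by_cases h1 : γ i = b <;> by_cases h2 : i ∈ Top <;> simp [h1, h2]
      _ = ∑ i ∈ Finset.univ ∩ Top, (if γ i = b then (1:ℝ) else 0) :=
          Finset.sum_ite_mem _ _ _
      _ = ∑ i ∈ Top, (if γ i = b then (1:ℝ) else 0) := by rw [Finset.univ_inter]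
  have hreT : ∀ (γ : Fin n → Bool) (b : Bool) (w : Fin n → ℝ), (∀ i ∈ Top, w (φ i) = w i) →
      ∑ i ∈ Top, (if γ (φ i) = b then w i else 0) = ∑ i ∈ Top, (if γ i = b then w i else 0) := by
    intro γ b w hw
    refine Finset.sum_nbij' φ φ (fun i hi => (hT i hi).1) (fun i hi => (hT i hi).1)
      (fun i _ => hinv i) (fun i _ => hinv i) ?_
    intro i hi
    rw [hw i hi]
  have hreN : ∀ (γ : Fin n → Bool) (b : Bool),
      ∑ i ∈ Topᶜ, (if γ (φ i) = b then dv i else 0)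
        = -∑ i ∈ Topᶜ, (if γ i = b then dv i else 0) := by
    intro γ b
    rw [← Finset.sum_neg_distrib]
    refine Finset.sum_nbij' φ φ ?_ ?_ (fun i _ => hinv i) (fun i _ => hinv i) ?_
    · intro i hi; simp only [Finset.mem_compl] at hi ⊢; exact (hN i hi).1
    · intro i hi; simp only [Finset.mem_compl] at hi ⊢; exact (hN i hi).1
    · intro i hi; simp only [Finset.mem_compl] at hi
      rw [(hN i hi).2]
      split_ifs <;> ring
  have pair : ∀ β, G β + G (Φ β) ≤ F β + F (Φ β) := by
    intro β
    have hGΦ : G (Φ β) = G β := by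
      simp only [hG]
      rw [hXp, hXp, hXp, hXp]
      rw [hreT β true (fun _ => (1:ℝ)) (fun _ _ => rfl),
        hreT β false (fun _ => (1:ℝ)) (fun _ _ => rfl)]
    have hnonnegXp : ∀ b : Bool, (0:ℝ) ≤ ∑ i ∈ Top, (if β i = b then (1:ℝ) else 0) := by
      intro b; refine Finset.sum_nonneg fun i _ => ?_; positivity
    by_cases hTe : eT (∑ i ∈ Top, if β i = true then (1:ℝ) else 0)
        (∑ i ∈ Top, if β i = false then (1:ℝ) else 0)
    · obtain ⟨b, hbzero⟩ : ∃ b, ∑ i ∈ Top, (if β i = b then (1:ℝ) else 0) = 0 := by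
        rcases hTe with h | h
        exacts [⟨true, h⟩, ⟨false, h⟩]
      have hb0 : ∀ i ∈ Top, β i = !b := by
        intro i hi
        have hterm := (Finset.sum_eq_zero_iff_of_nonneg
          (fun j _ => by positivity)).mp hbzero i hi
        by_contra hne
        have hbi : β i = b := by
          have hdec : ∀ x y : Bool, x ≠ !y → x = y := by decide
          exact hdec (β i) b hne
        rw [if_pos hbi] at hterm; norm_num at hterm
      set b0 := !b with hb0def
      have hGle : G β ≤ 1/2 := by
        simp only [hG]; rw [hXp, hXp]
        refine eE_le_half_of_not_D ?_
        rintro (⟨_, h2⟩ | ⟨h2, _⟩)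
        · exact absurd h2 (not_lt.mpr (hnonnegXp false))
        · exact absurd h2 (not_lt.mpr (hnonnegXp true))
      set u : ℝ := ∑ i ∈ Topᶜ, (if β i = b0 then dv i else 0) with hu
      have htop : ∀ (bb : Bool) (γ : Fin n → Bool), (∀ i ∈ Top, γ i = b0) →
          ∑ i ∈ Top, (if γ i = bb then dv i else 0) = if bb = b0 then Z else 0 := by
        intro bb γ hγ
        by_cases hbb : bb = b0
        · subst hbb; rw [if_pos rfl, hZdef]
          exact Finset.sum_congr rfl fun i hi => if_pos (hγ i hi)
        · rw [if_neg hbb]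
          refine Finset.sum_eq_zero fun i hi => if_neg ?_
          rw [hγ i hi]; exact fun hh => hbb hh.symm
      have hnon : ∀ bb : Bool, ∑ i ∈ Topᶜ, (if β i = bb then dv i else 0)
          = if bb = b0 then u else -u := by
        intro bb
        by_cases hbb : bb = b0
        · subst hbb; rw [if_pos rfl]
        · rw [if_neg hbb]
          have hpt : ∀ i, (if β i = bb then dv i else 0)
              = dv i - (if β i = b0 then dv i else 0) := by
            intro i
            by_cases hh : β i = b0
            · rw [if_pos hh, if_neg (by rw [hh]; exact fun e => hbb e.symm)]; ring
            · have hbi : β i = bb := by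
                have hdec : ∀ x y z : Bool, x ≠ z → y ≠ z → x = y := by decide
                exact hdec (β i) bb b0 hh hbb
              rw [if_pos hbi, if_neg hh]; ring
          rw [Finset.sum_congr rfl (fun i _ => hpt i), Finset.sum_sub_distrib, hcompl, hu]
          ring
      have hΦtop : ∀ i ∈ Top, Φ β i = b0 := fun i hi => hb0 (φ i) (hT i hi).1
      have hfull : ∀ (γ : Fin n → Bool) (bb : Bool), (∑ i, if γ i = bb then dv i else 0)
          = (∑ i ∈ Top, if γ i = bb then dv i else 0)
            + (∑ i ∈ Topᶜ, if γ i = bb then dv i else 0) :=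
        fun γ bb => (Finset.sum_add_sum_compl Top _).symm
      have hFβ : F β = eE ((if true = b0 then Z else 0) + (if true = b0 then u else -u))
          ((if false = b0 then Z else 0) + (if false = b0 then u else -u)) := by
        simp only [hF]
        rw [hfull β true, hfull β false, htop true β hb0, htop false β hb0, hnon, hnon]
      have hFΦ : F (Φ β) = eE ((if true = b0 then Z else 0) + -(if true = b0 then u else -u))
          ((if false = b0 then Z else 0) + -(if false = b0 then u else -u)) := by
        simp only [hF]
        rw [hfull (Φ β) true, hfull (Φ β) false, htop true (Φ β) hΦtop, htop false (Φ β) hΦtop]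
        have hΦpt : ∀ i, Φ β i = β (φ i) := fun i => rfl
        have e1 : ∑ i ∈ Topᶜ, (if Φ β i = true then dv i else 0)
            = -(if true = b0 then u else -u) := by
          simp only [hΦpt]; rw [hreN β true, hnon]
        have e2 : ∑ i ∈ Topᶜ, (if Φ β i = false then dv i else 0)
            = -(if false = b0 then u else -u) := by
          simp only [hΦpt]; rw [hreN β false, hnon]
        rw [e1, e2]
      have hone : 1 ≤ F β + F (Φ β) := by
        rw [hFβ, hFΦ]
        cases hbv : b0 with
        | true =>
          simp only [if_pos rfl, if_neg (by simp : ¬ (false = true)), if_true, zero_add,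
            neg_neg, ← sub_eq_add_neg, zero_sub]
          exact eE_pair hZ
        | false =>
          simp only [if_neg (by simp : ¬ (true = false)), if_pos rfl, if_true, zero_add,
            neg_neg, ← sub_eq_add_neg, zero_sub]
          rw [eE_comm (-u) (Z + u), eE_comm u (Z - u)]
          exact eE_pair hZ
      rw [hGΦ]
      linarith
    · have hGz : G β = 0 := by
        simp only [hG]; rw [hXp, hXp]
        refine eE_eq_zero_of_not ?_ hTe
        rintro (⟨_, h2⟩ | ⟨h2, _⟩)
        · exact absurd h2 (not_lt.mpr (hnonnegXp false))
        · exact absurd h2 (not_lt.mpr (hnonnegXp true))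
      have h1 : 0 ≤ F β := by simp only [hF]; exact eE_nonneg _ _
      have h2 : 0 ≤ F (Φ β) := by simp only [hF]; exact eE_nonneg _ _
      rw [hGΦ, hGz]
      linarith
  have hsumΦ : ∀ (H : (Fin n → Bool) → ℝ), ∑ β, H (Φ β) = ∑ β, H β := by
    intro H
    have hcoe : ⇑(hΦ.toPerm Φ) = Φ := rfl
    calc ∑ β, H (Φ β) = ∑ β, H ((hΦ.toPerm Φ) β) := by rw [hcoe]
      _ = ∑ β, H β := Equiv.sum_comp _ _
  show ∑ β, G β ≤ ∑ β, F β
  have hsums := Finset.sum_le_sum (fun β (_ : β ∈ Finset.univ) => pair β)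
  rw [Finset.sum_add_distrib, Finset.sum_add_distrib, hsumΦ G, hsumΦ F] at hsums
  linarith

lemma card_filter_get_eq_count {X : Type*} (P : List X) (x : X) :
    (Finset.univ.filter fun i : Fin P.length => P.get i = x).card = P.count x := by
  conv_rhs => rw [← List.ofFn_get P, List.ofFn_eq_map]
  rw [List.count_eq_countP, List.countP_map, List.countP_eq_length_filter]
  have hnd : (List.filter ((fun y => y == x) ∘ P.get) (List.finRange P.length)).Nodup :=
    (List.nodup_finRange _).filter _
  rw [← List.toFinset_card_of_nodup hnd, List.toFinset_filter, List.toFinset_finRange]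
  congr 1
  refine Finset.filter_congr fun i _ => ?_
  simp [Function.comp]

/-- From a self-inverse multiset symmetry of a list we can extract an involution on
indices realizing it. -/
lemma exists_pair_invol {X : Type*} (P : List X) (tw : X → X)
    (htw : ∀ x ∈ P, tw (tw x) = x) (hperm : (P.map tw).Perm P) :
    ∃ φ : Fin P.length → Fin P.length,
      Function.Involutive φ ∧ ∀ i, P.get (φ i) = tw (P.get i) := by
  set n := P.length with hn
  set S : X → Finset (Fin n) := fun x => Finset.univ.filter fun i => P.get i = x with hS
  have hmemS : ∀ (i : Fin n) (x : X), i ∈ S x ↔ P.get i = x := by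
    intro i x; simp [hS]
  have hcount : ∀ x ∈ P, P.count (tw x) = P.count x := by
    intro x hx
    rw [← hperm.count_eq (tw x), List.count_eq_countP, List.countP_map,
      List.count_eq_countP]
    refine List.countP_congr fun y hy => ?_
    constructor
    · intro h
      have h' : tw y = tw x := by simpa [Function.comp] using h
      have : y = x := by rw [← htw y hy, h', htw x hx]
      simp [this]
    · intro h
      have : y = x := by simpa using h
      simp [Function.comp, this]
  have hcard : ∀ x ∈ P, (S x).card = (S (tw x)).card := by
    intro x hx
    rw [hS]
    simp only
    rw [card_filter_get_eq_count, card_filter_get_eq_count, hcount x hx]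
  have hmemP : ∀ i : Fin n, P.get i ∈ P := fun i => P.get_mem _
  set φ : Fin n → Fin n := fun i =>
    ((S (tw (P.get i))).sort (· ≤ ·)).getD
      (((S (P.get i)).sort (· ≤ ·)).idxOf i) i with hφ
  have hidx : ∀ i : Fin n, ((S (P.get i)).sort (· ≤ ·)).idxOf i
      < ((S (P.get i)).sort (· ≤ ·)).length :=
    fun i => List.idxOf_lt_length_iff.mpr ((Finset.mem_sort _).mpr ((hmemS i _).mpr rfl))
  have hidx' : ∀ i : Fin n, ((S (P.get i)).sort (· ≤ ·)).idxOf i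
      < ((S (tw (P.get i))).sort (· ≤ ·)).length := by
    intro i
    rw [Finset.length_sort, ← hcard _ (hmemP i), ← Finset.length_sort (α := Fin n) (· ≤ ·)]
    exact hidx i
  have hφget : ∀ i : Fin n, φ i = ((S (tw (P.get i))).sort (· ≤ ·)).get
      ⟨((S (P.get i)).sort (· ≤ ·)).idxOf i, hidx' i⟩ := by
    intro i
    rw [hφ]
    exact List.getD_eq_get _ _ ⟨_, hidx' i⟩
  have hget : ∀ i, P.get (φ i) = tw (P.get i) := by
    intro i
    have : φ i ∈ S (tw (P.get i)) := by
      rw [hφget i]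
      exact (Finset.mem_sort _).mp (List.get_mem _ _)
    exact (hmemS _ _).mp this
  refine ⟨φ, ?_, hget⟩
  intro i
  have h1 : P.get (φ i) = tw (P.get i) := hget i
  have h2 : tw (P.get (φ i)) = P.get i := by rw [h1, htw _ (hmemP i)]
  have hidxφ : ((S (P.get (φ i))).sort (· ≤ ·)).idxOf (φ i)
      = ((S (P.get i)).sort (· ≤ ·)).idxOf i := by
    rw [h1, hφget i]
    exact List.get_idxOf (Finset.sort_nodup _ _) _
  have hstep : φ (φ i) = ((S (tw (P.get (φ i)))).sort (· ≤ ·)).getD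
      (((S (P.get (φ i))).sort (· ≤ ·)).idxOf (φ i)) (φ i) := rfl
  rw [hstep, h2, hidxφ, List.getD_eq_getElem _ _ (hidx i)]
  exact List.idxOf_get (hidx i)

lemma sum_filter_finRange {n : ℕ} (p : Fin n → Bool) (f : Fin n → ℝ) :
    (((List.finRange n).filter p).map f).sum = ∑ i, if p i = true then f i else 0 := by
  have hnd : ((List.finRange n).filter p).Nodup := (List.nodup_finRange n).filter p
  rw [← List.sum_toFinset _ hnd, List.toFinset_filter, List.toFinset_finRange,
    Finset.sum_filter]

lemma totalScore_subProfile (sv : ScoreVec m) (P : Profile A m) (β : Fin P.length → Bool)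
    (b : Bool) (x : A) :
    totalScore sv (subProfile P β b) x
      = ∑ i, if β i = b then sv.s ((P.get i) x) else 0 := by
  unfold totalScore subProfile
  rw [List.map_map]
  have h := sum_filter_finRange (fun i => β i == b) (fun i : Fin P.length => sv.s ((P.get i) x))
  exact h.trans (Finset.sum_congr rfl fun i _ => if_congr (by simp) rfl rfl)

lemma Xdiff_eq (sv : ScoreVec m) (P : Profile A m) (β : Fin P.length → Bool)
    (b : Bool) (a c : A) :
    totalScore sv (subProfile P β b) a - totalScore sv (subProfile P β b) c
      = ∑ i, if β i = b then sv.s ((P.get i) a) - sv.s ((P.get i) c) else 0 := by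
  rw [totalScore_subProfile, totalScore_subProfile, ← Finset.sum_sub_distrib]
  refine Finset.sum_congr rfl fun i _ => ?_
  split_ifs <;> ring

lemma applySplit_strict_iff (sv : ScoreVec m) (P : Profile A m) (β : Fin P.length → Bool)
    (b : Bool) (x y : A) :
    (applySplit (posSWF sv) (subProfile P β b)).strict x y
      ↔ totalScore sv (subProfile P β b) y < totalScore sv (subProfile P β b) x := by
  unfold applySplit
  by_cases hL : subProfile P β b = []
  · rw [if_pos hL, hL]
    constructor
    · intro h; exact (h.2 trivial).elim
    · intro h; exact absurd h (lt_irrefl (0:ℝ))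
  · rw [if_neg hL]
    show (totalScore sv _ y ≤ totalScore sv _ x ∧ ¬ totalScore sv _ x ≤ totalScore sv _ y) ↔ _
    exact (lt_iff_le_not_ge).symm

lemma applySplit_tied_iff (sv : ScoreVec m) (P : Profile A m) (β : Fin P.length → Bool)
    (b : Bool) (x y : A) :
    (applySplit (posSWF sv) (subProfile P β b)).tied x y
      ↔ totalScore sv (subProfile P β b) x = totalScore sv (subProfile P β b) y := by
  unfold applySplit
  by_cases hL : subProfile P β b = []
  · rw [if_pos hL, hL]
    constructor
    · intro _; rfl
    · intro _; exact ⟨trivial, trivial⟩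
  · rw [if_neg hL]
    show (totalScore sv _ y ≤ totalScore sv _ x ∧ totalScore sv _ x ≤ totalScore sv _ y) ↔ _
    constructor
    · rintro ⟨h1, h2⟩; exact le_antisymm h2 h1
    · intro h; exact ⟨h.ge, h.le⟩

lemma prob_sum_eq [Fintype A] (sv : ScoreVec m) (P : Profile A m) (a c : A) :
    probD (posSWF sv) P a c + probT (posSWF sv) P a c / 2
      = (∑ β : Fin P.length → Bool,
          eE (∑ i, if β i = true then sv.s ((P.get i) a) - sv.s ((P.get i) c) else 0)
             (∑ i, if β i = false then sv.s ((P.get i) a) - sv.s ((P.get i) c) else 0))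
        / 2 ^ P.length := by
  have hD : ∀ (β : Fin P.length → Bool),
      (((applySplit (posSWF sv) (subProfile P β true)).strict a c ∧
        (applySplit (posSWF sv) (subProfile P β false)).strict c a) ∨
       ((applySplit (posSWF sv) (subProfile P β true)).strict c a ∧
        (applySplit (posSWF sv) (subProfile P β false)).strict a c))
      ↔ eD (∑ i, if β i = true then sv.s ((P.get i) a) - sv.s ((P.get i) c) else 0)
          (∑ i, if β i = false then sv.s ((P.get i) a) - sv.s ((P.get i) c) else 0) := by
    intro β
    have hs : ∀ b : Bool, ((applySplit (posSWF sv) (subProfile P β b)).strict a c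
        ↔ 0 < ∑ i, if β i = b then sv.s ((P.get i) a) - sv.s ((P.get i) c) else 0) := by
      intro b
      rw [applySplit_strict_iff, ← Xdiff_eq sv P β b a c, sub_pos]
    have hs' : ∀ b : Bool, ((applySplit (posSWF sv) (subProfile P β b)).strict c a
        ↔ (∑ i, if β i = b then sv.s ((P.get i) a) - sv.s ((P.get i) c) else 0) < 0) := by
      intro b
      rw [applySplit_strict_iff, ← Xdiff_eq sv P β b a c, sub_neg]
    unfold eD
    rw [hs true, hs false, hs' true, hs' false]
  have hT : ∀ (β : Fin P.length → Bool),
      ((applySplit (posSWF sv) (subProfile P β true)).tied a c ∨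
       (applySplit (posSWF sv) (subProfile P β false)).tied a c)
      ↔ eT (∑ i, if β i = true then sv.s ((P.get i) a) - sv.s ((P.get i) c) else 0)
          (∑ i, if β i = false then sv.s ((P.get i) a) - sv.s ((P.get i) c) else 0) := by
    intro β
    have ht : ∀ b : Bool, ((applySplit (posSWF sv) (subProfile P β b)).tied a c
        ↔ (∑ i, if β i = b then sv.s ((P.get i) a) - sv.s ((P.get i) c) else 0) = 0) := by
      intro b
      rw [applySplit_tied_iff, ← Xdiff_eq sv P β b a c, sub_eq_zero]
    unfold eT
    rw [ht true, ht false]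
  unfold probD probT
  rw [← Finset.sum_boole, ← Finset.sum_boole]
  rw [Finset.sum_congr rfl (fun β (_ : β ∈ Finset.univ) => if_congr (hD β) rfl rfl)]
  rw [Finset.sum_congr rfl (fun β (_ : β ∈ Finset.univ) => if_congr (hT β) rfl rfl)]
  have hsplit : (∑ β : Fin P.length → Bool,
        eE (∑ i, if β i = true then sv.s ((P.get i) a) - sv.s ((P.get i) c) else 0)
           (∑ i, if β i = false then sv.s ((P.get i) a) - sv.s ((P.get i) c) else 0))
      = (∑ β : Fin P.length → Bool,
          if eD (∑ i, if β i = true then sv.s ((P.get i) a) - sv.s ((P.get i) c) else 0)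
              (∑ i, if β i = false then sv.s ((P.get i) a) - sv.s ((P.get i) c) else 0)
            then (1:ℝ) else 0)
        + (∑ β : Fin P.length → Bool,
            if eT (∑ i, if β i = true then sv.s ((P.get i) a) - sv.s ((P.get i) c) else 0)
                (∑ i, if β i = false then sv.s ((P.get i) a) - sv.s ((P.get i) c) else 0)
              then (1:ℝ) else 0) / 2 := by
    unfold eE
    rw [Finset.sum_add_distrib, ← Finset.sum_div]
  rw [hsplit]
  ring

end Statement7Aux

/-- the main lemma (part 2): if `c` is ranked first by no voter, then for
every positional scoring rule `f ≠ f_p`, every alternative `a ≠ c` and every `k ∈ ℤ₊`,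
`P[D] + P[T]/2` on the shuffled profile is at least as large for `f` as for plurality. -/
theorem shuffle_lemma_part2 {A : Type*} [Fintype A] {m : ℕ} (hm2 : 2 ≤ m) (hm : 3 ≤ m)
    (hcard : Fintype.card A = m) (σ : Profile A m)
    (hnt : NoTies (posSWF (pluralityVec m hm2) σ))
    (c : A) (hc : topCount σ c = 0)
    (sv : ScoreVec m) (hsv : sv ≠ pluralityVec m hm2)
    (a : A) (ha : a ≠ c) (k : ℕ) (hk : 1 ≤ k) :
    probD (posSWF (pluralityVec m hm2)) (shuffle (tailPositions m) k σ) a c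
        + probT (posSWF (pluralityVec m hm2)) (shuffle (tailPositions m) k σ) a c / 2
      ≤ probD (posSWF sv) (shuffle (tailPositions m) k σ) a c
        + probT (posSWF sv) (shuffle (tailPositions m) k σ) a c / 2 := by
  classical
  have hm0 : 0 < m := by omega
  set P : Profile A m := shuffle (tailPositions m) k σ with hP
  set p0 : Fin m := ⟨0, hm0⟩ with hp0
  set lastP : Fin m := ⟨m - 1, Nat.sub_lt hm0 Nat.one_pos⟩ with hlastP
  have hnt0 : ∀ i : Fin m, i ∉ tailPositions m ↔ i = p0 := by
    intro i
    simp only [tailPositions, Finset.mem_filter, Finset.mem_univ, true_and, not_le,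
      Fin.ext_iff, hp0]
    omega
  have hmemperm : ∀ π : Equiv.Perm (Fin m),
      π ∈ permsOn (tailPositions m) ↔ ∀ i ∉ tailPositions m, π i = i := by
    intro π; simp [permsOn]
  have hfix0 : ∀ π ∈ permsOn (tailPositions m), π p0 = p0 := fun π hπ =>
    (hmemperm π).mp hπ p0 ((hnt0 p0).mpr rfl)
  have hne0 : ∀ π ∈ permsOn (tailPositions m), ∀ j : Fin m, j ≠ p0 → π j ≠ p0 := by
    intro π hπ j hj heq
    exact hj (π.injective (heq.trans (hfix0 π hπ).symm))
  have hcσ : ∀ r ∈ σ, r c ≠ p0 := by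
    intro r hr heq
    unfold topCount at hc
    have h0 := List.countP_eq_zero.mp hc r hr
    simp only [heq, hp0] at h0
    exact h0 (by norm_num)
  have hRpos : 0 < k * Nat.factorial m / Nat.factorial (tailPositions m).card := by
    refine Nat.div_pos ?_ (Nat.factorial_pos _)
    calc Nat.factorial (tailPositions m).card ≤ Nat.factorial m := by
          refine Nat.factorial_le ?_
          calc (tailPositions m).card ≤ Finset.univ.card := Finset.card_filter_le _ _
            _ = m := by simp
      _ ≤ k * Nat.factorial m := Nat.le_mul_of_pos_left _ (by omega)
  have hmemP_iff : ∀ x : Ranking A m, x ∈ P ↔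
      ∃ r ∈ σ, ∃ π ∈ permsOn (tailPositions m), x = r.trans π := by
    intro x
    rw [hP]
    unfold shuffle
    simp only [List.mem_flatMap, List.mem_replicate]
    constructor
    · rintro ⟨r, hr, π, hπ, _, rfl⟩; exact ⟨r, hr, π, hπ, rfl⟩
    · rintro ⟨r, hr, π, hπ, rfl⟩; exact ⟨r, hr, π, hπ, hRpos.ne', rfl⟩
  have hcP : ∀ x ∈ P, x c ≠ p0 := by
    intro x hx
    obtain ⟨r, hr, π, hπ, rfl⟩ := (hmemP_iff x).mp hx
    show π (r c) ≠ p0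
    exact hne0 π hπ (r c) (hcσ r hr)
  -- existence of an `a`-top voter
  have hatop : ∃ r₀ ∈ σ, r₀ a = p0 := by
    by_contra hno
    push_neg at hno
    have hzc : totalScore (pluralityVec m hm2) σ c = 0 := by
      unfold totalScore
      refine List.sum_eq_zero ?_
      intro v hv
      rw [List.mem_map] at hv
      obtain ⟨r, hr, rfl⟩ := hv
      show (if (r c).val = 0 then (1:ℝ) else 0) = 0
      exact if_neg fun h => hcσ r hr (Fin.ext h)
    have hza : totalScore (pluralityVec m hm2) σ a = 0 := by
      unfold totalScore
      refine List.sum_eq_zero ?_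
      intro v hv
      rw [List.mem_map] at hv
      obtain ⟨r, hr, rfl⟩ := hv
      show (if (r a).val = 0 then (1:ℝ) else 0) = 0
      exact if_neg fun h => hno r hr (Fin.ext h)
    refine hnt a c ha ⟨?_, ?_⟩
    · show totalScore (pluralityVec m hm2) σ c ≤ totalScore (pluralityVec m hm2) σ a
      rw [hza, hzc]
    · show totalScore (pluralityVec m hm2) σ a ≤ totalScore (pluralityVec m hm2) σ c
      rw [hza, hzc]
  obtain ⟨r₀, hr₀, hr₀a⟩ := hatop
  have hr₀c : r₀ c ≠ p0 := hcσ r₀ hr₀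
  set π₂ : Equiv.Perm (Fin m) := Equiv.swap (r₀ c) lastP with hπ₂def
  have hlast_ne : lastP ≠ p0 := by
    simp only [hlastP, hp0, Ne, Fin.ext_iff]
    omega
  have hπ₂mem : π₂ ∈ permsOn (tailPositions m) := by
    rw [hmemperm]
    intro i hi
    rw [hnt0 i] at hi
    subst hi
    rw [hπ₂def]
    exact Equiv.swap_apply_of_ne_of_ne (Ne.symm hr₀c) (Ne.symm hlast_ne)
  have hx₀mem : r₀.trans π₂ ∈ P := (hmemP_iff _).mpr ⟨r₀, hr₀, π₂, hπ₂mem, rfl⟩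
  obtain ⟨i₂, hi₂⟩ := List.mem_iff_get.mp hx₀mem
  -- the swap involution on ballots
  set tw : Ranking A m → Ranking A m := fun x =>
    if x a = p0 then x else x.trans (Equiv.swap (x a) (x c)) with htwdef
  have htw_top : ∀ x : Ranking A m, x a = p0 → tw x = x := fun x h => if_pos h
  have htw_else : ∀ x : Ranking A m, x a ≠ p0 →
      tw x = x.trans (Equiv.swap (x a) (x c)) := fun x h => if_neg h
  have htw_a : ∀ x : Ranking A m, x a ≠ p0 → (tw x) a = x c := by
    intro x h
    rw [htw_else x h]
    show Equiv.swap (x a) (x c) (x a) = x c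
    exact Equiv.swap_apply_left _ _
  have htw_c : ∀ x : Ranking A m, x a ≠ p0 → (tw x) c = x a := by
    intro x h
    rw [htw_else x h]
    show Equiv.swap (x a) (x c) (x c) = x a
    exact Equiv.swap_apply_right _ _
  have htw_invol : ∀ x ∈ P, tw (tw x) = x := by
    intro x hx
    by_cases hxa : x a = p0
    · rw [htw_top x hxa, htw_top x hxa]
    · have h2 : (tw x) a ≠ p0 := by rw [htw_a x hxa]; exact hcP x hx
      rw [htw_else (tw x) h2, htw_a x hxa, htw_c x hxa, htw_else x hxa, Equiv.trans_assoc,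
        Equiv.swap_comm (x c) (x a),
        show (Equiv.swap (x a) (x c)).trans (Equiv.swap (x a) (x c)) = Equiv.refl (Fin m)
          from Equiv.swap_mul_self _ _,
        Equiv.trans_refl]
  -- `P.map tw` is a permutation of `P`
  have hmap : (P.map tw).Perm P := by
    rw [hP]
    unfold shuffle
    rw [List.map_flatMap]
    refine List.Perm.flatMap_left σ ?_
    intro r hr
    by_cases hra : r a = p0
    · have hcong : ∀ x ∈ (permsOn (tailPositions m)).flatMap
          (fun π => List.replicate
            (k * Nat.factorial m / Nat.factorial (tailPositions m).card) (r.trans π)),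
          tw x = x := by
        intro x hx
        simp only [List.mem_flatMap, List.mem_replicate] at hx
        obtain ⟨π, hπ, _, rfl⟩ := hx
        refine htw_top _ ?_
        show π (r a) = p0
        rw [hra]
        exact hfix0 π hπ
      rw [List.map_congr_left hcong, List.map_id']
    · have hrc := hcσ r hr
      set e : Equiv.Perm (Fin m) → Equiv.Perm (Fin m) :=
        fun π => π.trans (Equiv.swap (π (r a)) (π (r c))) with hedef
      have he_mem : ∀ π ∈ permsOn (tailPositions m), e π ∈ permsOn (tailPositions m) := by
        intro π hπ
        rw [hmemperm]
        intro i hi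
        rw [hnt0 i] at hi
        subst hi
        show Equiv.swap (π (r a)) (π (r c)) (π p0) = p0
        rw [hfix0 π hπ]
        exact Equiv.swap_apply_of_ne_of_ne (Ne.symm (hne0 π hπ _ hra))
          (Ne.symm (hne0 π hπ _ hrc))
      have he_inv : Function.Involutive e := by
        intro π
        have h1 : (e π) (r a) = π (r c) := by
          show Equiv.swap (π (r a)) (π (r c)) (π (r a)) = π (r c)
          exact Equiv.swap_apply_left _ _
        have h2 : (e π) (r c) = π (r a) := by
          show Equiv.swap (π (r a)) (π (r c)) (π (r c)) = π (r a)
          exact Equiv.swap_apply_right _ _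
        show (e π).trans (Equiv.swap ((e π) (r a)) ((e π) (r c))) = π
        rw [h1, h2]
        show (π.trans (Equiv.swap (π (r a)) (π (r c)))).trans
          (Equiv.swap (π (r c)) (π (r a))) = π
        rw [Equiv.trans_assoc, Equiv.swap_comm (π (r c)) (π (r a)),
          show (Equiv.swap (π (r a)) (π (r c))).trans (Equiv.swap (π (r a)) (π (r c)))
            = Equiv.refl (Fin m) from Equiv.swap_mul_self _ _,
          Equiv.trans_refl]
      have htw_rtrans : ∀ π ∈ permsOn (tailPositions m),
          tw (r.trans π) = r.trans (e π) := by
        intro π hπ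
        have hne : (r.trans π) a ≠ p0 := by
          show π (r a) ≠ p0
          exact hne0 π hπ _ hra
        rw [htw_else _ hne]
        show (r.trans π).trans (Equiv.swap (π (r a)) (π (r c))) = r.trans (e π)
        exact Equiv.trans_assoc _ _ _
      have hperm_e : ((permsOn (tailPositions m)).map e).Perm (permsOn (tailPositions m)) := by
        refine List.perm_of_nodup_nodup_toFinset_eq
          (List.Nodup.map he_inv.injective (Finset.nodup_toList _))
          (Finset.nodup_toList _) ?_
        ext π
        simp only [List.mem_toFinset, List.mem_map]
        constructor
        · rintro ⟨y, hy, rfl⟩; exact he_mem y hy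
        · intro hπ; exact ⟨e π, he_mem π hπ, he_inv π⟩
      have stepA : (List.map tw ((permsOn (tailPositions m)).flatMap
          fun π => List.replicate
            (k * Nat.factorial m / Nat.factorial (tailPositions m).card)
            (r.trans π))).Perm
          ((permsOn (tailPositions m)).flatMap fun π => List.replicate
            (k * Nat.factorial m / Nat.factorial (tailPositions m).card)
            (r.trans (e π))) := by
        rw [List.map_flatMap]
        refine List.Perm.flatMap_left _ ?_
        intro π hπ
        rw [List.map_replicate, htw_rtrans π hπ]
      have stepB : (((permsOn (tailPositions m)).flatMap fun π => List.replicate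
            (k * Nat.factorial m / Nat.factorial (tailPositions m).card)
            (r.trans (e π)))).Perm
          ((permsOn (tailPositions m)).flatMap fun π => List.replicate
            (k * Nat.factorial m / Nat.factorial (tailPositions m).card)
            (r.trans π)) := by
        have h1 := List.flatMap_map e (fun π => List.replicate
          (k * Nat.factorial m / Nat.factorial (tailPositions m).card) (r.trans π))
          (permsOn (tailPositions m))
        rw [show ((permsOn (tailPositions m)).flatMap fun π => List.replicate
            (k * Nat.factorial m / Nat.factorial (tailPositions m).card)
            (r.trans (e π))) = ((permsOn (tailPositions m)).map e).flatMap
            (fun π => List.replicate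
              (k * Nat.factorial m / Nat.factorial (tailPositions m).card)
              (r.trans π)) from h1.symm]
        exact List.Perm.flatMap_right _ hperm_e
      exact stepA.trans stepB
  obtain ⟨φ, hφinv, hφget⟩ := exists_pair_invol P tw htw_invol hmap
  set Top : Finset (Fin P.length) := Finset.univ.filter (fun i => (P.get i) a = p0)
    with hTopdef
  have hmemTop : ∀ i, i ∈ Top ↔ (P.get i) a = p0 := by intro i; simp [hTopdef]
  set dv : Fin P.length → ℝ := fun i => sv.s ((P.get i) a) - sv.s ((P.get i) c) with hdvdef
  have hTfact : ∀ i ∈ Top, φ i ∈ Top ∧ dv (φ i) = dv i := by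
    intro i hi
    rw [hmemTop] at hi
    have hsame : P.get (φ i) = P.get i := by rw [hφget i, htw_top _ hi]
    constructor
    · rw [hmemTop, hsame]; exact hi
    · simp only [hdvdef]; rw [hsame]
  have hNfact : ∀ i ∉ Top, φ i ∉ Top ∧ dv (φ i) = -dv i := by
    intro i hi
    rw [hmemTop] at hi
    have h1 : P.get (φ i) a = P.get i c := by rw [hφget i]; exact htw_a _ hi
    have h2 : P.get (φ i) c = P.get i a := by rw [hφget i]; exact htw_c _ hi
    refine ⟨fun hmem => ?_, ?_⟩
    · rw [hmemTop, h1] at hmem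
      exact hcP _ (P.get_mem _) hmem
    · simp only [hdvdef]
      rw [h1, h2]; ring
  have hs_le_one : ∀ j : Fin m, sv.s j ≤ 1 := by
    intro j
    have h := sv.anti (show (⟨0, hm0⟩ : Fin m) ≤ j from by simp [Fin.le_def])
    rwa [sv.first hm0] at h
  have hsp0 : sv.s p0 = 1 := by rw [hp0]; exact sv.first hm0
  have hA₂ : (r₀.trans π₂) a = p0 := by
    show π₂ (r₀ a) = p0
    rw [hr₀a, hπ₂def]
    exact Equiv.swap_apply_of_ne_of_ne (Ne.symm hr₀c) (Ne.symm hlast_ne)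
  have hi₂Top : i₂ ∈ Top := by
    rw [hmemTop, hi₂]
    exact hA₂
  have hdvi₂ : dv i₂ = 1 := by
    simp only [hdvdef]
    rw [hi₂]
    have hC : (r₀.trans π₂) c = lastP := by
      show π₂ (r₀ c) = lastP
      rw [hπ₂def]
      exact Equiv.swap_apply_left _ _
    rw [hA₂, hC, hsp0, hlastP, sv.last hm0]
    ring
  have hZ : 0 < ∑ i ∈ Top, dv i := by
    refine Finset.sum_pos' ?_ ⟨i₂, hi₂Top, by rw [hdvi₂]; norm_num⟩
    intro i hi
    rw [hmemTop] at hi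
    simp only [hdvdef]
    rw [hi, hsp0]
    have := hs_le_one ((P.get i) c)
    linarith
  -- final assembly
  rw [prob_sum_eq (pluralityVec m hm2) P a c, prob_sum_eq sv P a c]
  have hplur : ∀ (β : Fin P.length → Bool) (b : Bool),
      (∑ i, if β i = b then (pluralityVec m hm2).s ((P.get i) a)
          - (pluralityVec m hm2).s ((P.get i) c) else 0)
        = ∑ i, if β i = b then (if i ∈ Top then (1:ℝ) else 0) else 0 := by
    intro β b
    refine Finset.sum_congr rfl fun i _ => ?_
    refine if_congr Iff.rfl ?_ rfl
    have hcval : (pluralityVec m hm2).s ((P.get i) c) = 0 := by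
      show (if ((P.get i) c).val = 0 then (1:ℝ) else 0) = 0
      exact if_neg fun h => hcP _ (P.get_mem _) (Fin.ext h)
    have haval : (pluralityVec m hm2).s ((P.get i) a) = (if i ∈ Top then (1:ℝ) else 0) := by
      show (if ((P.get i) a).val = 0 then (1:ℝ) else 0) = _
      refine if_congr ?_ rfl rfl
      rw [hmemTop i]
      constructor
      · intro h; exact Fin.ext h
      · intro h; rw [h]
    rw [hcval, haval]; ring
  have key : (∑ β : Fin P.length → Bool,
        eE (∑ i, if β i = true then (pluralityVec m hm2).s ((P.get i) a)
            - (pluralityVec m hm2).s ((P.get i) c) else 0)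
          (∑ i, if β i = false then (pluralityVec m hm2).s ((P.get i) a)
            - (pluralityVec m hm2).s ((P.get i) c) else 0))
      ≤ ∑ β : Fin P.length → Bool,
        eE (∑ i, if β i = true then sv.s ((P.get i) a) - sv.s ((P.get i) c) else 0)
          (∑ i, if β i = false then sv.s ((P.get i) a) - sv.s ((P.get i) c) else 0) := by
    have hc2 := core_sum_le dv Top φ hφinv hTfact hNfact hZ
    simp only [hdvdef] at hc2
    calc (∑ β : Fin P.length → Bool,
          eE (∑ i, if β i = true then (pluralityVec m hm2).s ((P.get i) a)
              - (pluralityVec m hm2).s ((P.get i) c) else 0)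
            (∑ i, if β i = false then (pluralityVec m hm2).s ((P.get i) a)
              - (pluralityVec m hm2).s ((P.get i) c) else 0))
        = ∑ β : Fin P.length → Bool,
          eE (∑ i, if β i = true then (if i ∈ Top then (1:ℝ) else 0) else 0)
            (∑ i, if β i = false then (if i ∈ Top then (1:ℝ) else 0) else 0) :=
          Finset.sum_congr rfl fun β _ => by rw [hplur β true, hplur β false]
      _ ≤ _ := hc2
  have h2n : (0:ℝ) ≤ (2 ^ P.length)⁻¹ := by positivity
  have := mul_le_mul_of_nonneg_right key h2n
  simpa [div_eq_mul_inv] using this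


end
end

section
/- If every SWF in a set F of candidate rules is anonymous and neutral, and AbC(F,σ) is a singleton for every profile σ, then the induced SWF f_{AbC}^F (which maps σ to f(σ) for the unique f ∈ AbC(F,σ)) is anonymous and neutral. -/
open scoped Classical

noncomputable section

variable {A : Type*} {m : ℕ}

/- Auxiliary lemmas for Statement 9. -/

lemma WeakRanking.ext'_s9 {A : Type*} {r r' : WeakRanking A} (h : r.ge = r'.ge) : r = r' := by
  cases r; cases r'; cases h; rfl

lemma permuteWeak_allTied (π : Equiv.Perm A) :
    permuteWeak π (WeakRanking.allTied A) = WeakRanking.allTied A :=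
  WeakRanking.ext'_s9 rfl

lemma permuteWeak_strict (π : Equiv.Perm A) (w : WeakRanking A) (a b : A) :
    (permuteWeak π w).strict a b ↔ w.strict (π.symm a) (π.symm b) := Iff.rfl

lemma permuteWeak_tied (π : Equiv.Perm A) (w : WeakRanking A) (a b : A) :
    (permuteWeak π w).tied a b ↔ w.tied (π.symm a) (π.symm b) := Iff.rfl

lemma KT_permute [Fintype A] (π : Equiv.Perm A) (w1 w2 : WeakRanking A) :
    KT (permuteWeak π w1) (permuteWeak π w2) = KT w1 w2 := by
  unfold KT
  congr 1
  refine (Finset.sum_equiv (Equiv.prodCongr π π) ?_ ?_).symm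
  · intro p
    simp only [Finset.mem_offDiag, Finset.mem_univ, true_and, Equiv.prodCongr_apply,
      Prod.map_fst, Prod.map_snd]
    exact (not_congr (EmbeddingLike.apply_eq_iff_eq π)).symm
  · intro p _
    simp [permuteWeak_strict, permuteWeak_tied]

/-- A permutation of lists gives an index bijection compatible with `get`. -/
lemma exists_get_equiv {α : Type*} {l l' : List α} (h : l.Perm l') :
    ∃ e : Fin l'.length ≃ Fin l.length, ∀ i, l'.get i = l.get (e i) := by
  induction h with
  | nil => exact ⟨Equiv.refl _, fun i => i.elim0⟩
  | cons x h ih =>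
      obtain ⟨e, he⟩ := ih
      refine ⟨(finSuccEquiv _).trans ((Equiv.optionCongr e).trans (finSuccEquiv _).symm), ?_⟩
      intro i
      refine Fin.cases ?_ (fun j => ?_) i
      · simp
      · simpa using he j
  | swap x y l =>
      have hz : 0 < l.length + 2 := by omega
      have ho : 1 < l.length + 2 := by omega
      let sw : Fin (l.length + 2) → Fin (l.length + 2) := fun i =>
        if i.val = 0 then ⟨1, ho⟩ else if i.val = 1 then ⟨0, hz⟩ else i
      have hsw : ∀ i, sw (sw i) = i := by
        intro i
        simp only [sw]
        rcases i with ⟨_ | _ | k, hk⟩ <;> simp [sw]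
      refine ⟨⟨sw, sw, hsw, hsw⟩, ?_⟩
      intro i
      rcases i with ⟨_ | _ | k, hk⟩
      · show (x :: y :: l).get ⟨0, hk⟩ = (y :: x :: l).get (sw ⟨0, hk⟩)
        simp only [sw]
        rfl
      · show (x :: y :: l).get ⟨1, hk⟩ = (y :: x :: l).get (sw ⟨1, hk⟩)
        simp only [sw]
        rfl
      · show (x :: y :: l).get ⟨k + 1 + 1, hk⟩ = (y :: x :: l).get (sw ⟨k + 1 + 1, hk⟩)
        have : sw ⟨k + 1 + 1, hk⟩ = ⟨k + 1 + 1, hk⟩ := by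
          simp [sw]
        rw [this]
        rfl
  | trans h1 h2 ih1 ih2 =>
      obtain ⟨e1, he1⟩ := ih1
      obtain ⟨e2, he2⟩ := ih2
      exact ⟨e2.trans e1, fun i => by rw [he2, he1]; rfl⟩

lemma subProfile_perm_map {σ σ' : Profile A m} (g : Ranking A m → Ranking A m)
    (e : Fin σ'.length ≃ Fin σ.length) (he : ∀ i, σ'.get i = g (σ.get (e i)))
    (β : Fin σ.length → Bool) (b : Bool) :
    (subProfile σ' (β ∘ e) b).Perm ((subProfile σ β b).map g) := by
  have key : (((List.finRange σ'.length).filter fun i => β (e i) == b).map e).Perm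
      ((List.finRange σ.length).filter fun j => β j == b) := by
    rw [List.perm_ext_iff_of_nodup
      (((List.nodup_finRange _).filter _).map e.injective)
      ((List.nodup_finRange _).filter _)]
    intro j
    simp only [List.mem_map, List.mem_filter, List.mem_finRange, true_and]
    constructor
    · rintro ⟨i, hi, rfl⟩; exact hi
    · intro hj; exact ⟨e.symm j, by simpa using hj, by simp⟩
  unfold subProfile
  have h1 : ((List.finRange σ'.length).filter fun i => (β ∘ e) i == b).map σ'.get
      = (((List.finRange σ'.length).filter fun i => β (e i) == b).map e).map
        (fun j => g (σ.get j)) := by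
    rw [List.map_map]
    exact List.map_congr_left fun i _ => he i
  rw [h1]
  have h2 := key.map fun j => g (σ.get j)
  refine h2.trans ?_
  rw [List.map_map]
  exact List.Perm.refl _

lemma applySplit_congr (f : SWF A m) (hf : AnonymousSWF f) {τ τ' : Profile A m}
    (h : τ.Perm τ') : applySplit f τ = applySplit f τ' := by
  unfold applySplit
  by_cases hτ : τ = []
  · subst hτ
    rw [if_pos rfl, if_pos h.symm.eq_nil]
  · have hτ' : τ' ≠ [] := fun hh => hτ (hh ▸ h).eq_nil
    rw [if_neg hτ, if_neg hτ', hf _ _ h]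

lemma applySplit_map (f : SWF A m) (hf : NeutralSWF f) (π : Equiv.Perm A) (τ : Profile A m) :
    applySplit f (τ.map fun r => π.symm.trans r) = permuteWeak π (applySplit f τ) := by
  unfold applySplit
  by_cases hτ : τ = []
  · subst hτ
    simp [permuteWeak_allTied]
  · rw [if_neg (by simpa using hτ), if_neg hτ, hf π τ]

lemma expDisagree_congr [Fintype A] (f : SWF A m) (hf : AnonymousSWF f)
    {σ σ' : Profile A m} (hp : σ.Perm σ') : expDisagree f σ' = expDisagree f σ := by
  obtain ⟨e, he⟩ := exists_get_equiv hp
  unfold expDisagree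
  have hn : σ'.length = σ.length := hp.length_eq.symm
  have hterm : ∀ (β : Fin σ.length → Bool) (b : Bool),
      applySplit f (subProfile σ' (β ∘ e) b) = applySplit f (subProfile σ β b) := by
    intro β b
    have := subProfile_perm_map id e (by simpa using he) β b
    rw [List.map_id] at this
    exact applySplit_congr f hf this
  congr 1
  · refine Fintype.sum_equiv (Equiv.arrowCongr e (Equiv.refl Bool)) _ _ ?_
    intro β'
    have hβ : β' = (fun i => β' (e.symm i)) ∘ e := by
      funext i; simp
    calc KT (applySplit f (subProfile σ' β' true)) (applySplit f (subProfile σ' β' false))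
        = KT (applySplit f (subProfile σ' ((fun i => β' (e.symm i)) ∘ e) true))
            (applySplit f (subProfile σ' ((fun i => β' (e.symm i)) ∘ e) false)) := by
          rw [← hβ]
      _ = _ := by
          rw [hterm _ true, hterm _ false]
          rfl
  · rw [hn]

lemma expDisagree_map [Fintype A] (f : SWF A m) (hfa : AnonymousSWF f) (hfn : NeutralSWF f)
    (π : Equiv.Perm A) (σ : Profile A m) :
    expDisagree f (σ.map fun r => π.symm.trans r) = expDisagree f σ := by
  set g : Ranking A m → Ranking A m := fun r => π.symm.trans r with hg
  have hl : (σ.map g).length = σ.length := List.length_map g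
  set e : Fin (σ.map g).length ≃ Fin σ.length := finCongr hl with hedef
  have he : ∀ i, (σ.map g).get i = g (σ.get (e i)) := by
    intro i
    simp [hedef, List.get_eq_getElem, List.getElem_map, finCongr, Fin.cast]
  have hterm : ∀ (β : Fin σ.length → Bool) (b : Bool),
      applySplit f (subProfile (σ.map g) (β ∘ e) b)
        = permuteWeak π (applySplit f (subProfile σ β b)) := by
    intro β b
    have h1 := subProfile_perm_map g e he β b
    have h2 := applySplit_congr f hfa h1
    rw [h2]
    exact applySplit_map f hfn π _
  unfold expDisagree
  congr 1
  · refine Fintype.sum_equiv (Equiv.arrowCongr e (Equiv.refl Bool)) _ _ ?_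
    intro β'
    have hβ : β' = (fun i => β' (e.symm i)) ∘ e := by
      funext i; simp
    calc KT (applySplit f (subProfile (σ.map g) β' true))
          (applySplit f (subProfile (σ.map g) β' false))
        = KT (applySplit f (subProfile (σ.map g) ((fun i => β' (e.symm i)) ∘ e) true))
            (applySplit f (subProfile (σ.map g) ((fun i => β' (e.symm i)) ∘ e) false)) := by
          rw [← hβ]
      _ = KT (permuteWeak π (applySplit f (subProfile σ (fun i => β' (e.symm i)) true)))
            (permuteWeak π (applySplit f (subProfile σ (fun i => β' (e.symm i)) false))) := by
          rw [hterm _ true, hterm _ false]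
      _ = _ := by
          rw [KT_permute]
          rfl
  · rw [hl]

lemma AbC_congr_perm [Fintype A] (F : Set (SWF A m)) (hanon : ∀ f ∈ F, AnonymousSWF f)
    {σ σ' : Profile A m} (hp : σ.Perm σ') : AbC F σ = AbC F σ' := by
  ext f
  simp only [AbC, Set.mem_setOf_eq]
  constructor
  · rintro ⟨hfF, hmin⟩
    refine ⟨hfF, fun g hg => ?_⟩
    rw [expDisagree_congr f (hanon f hfF) hp, expDisagree_congr g (hanon g hg) hp]
    exact hmin g hg
  · rintro ⟨hfF, hmin⟩
    refine ⟨hfF, fun g hg => ?_⟩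
    rw [← expDisagree_congr f (hanon f hfF) hp, ← expDisagree_congr g (hanon g hg) hp]
    exact hmin g hg

lemma AbC_congr_map [Fintype A] (F : Set (SWF A m)) (hanon : ∀ f ∈ F, AnonymousSWF f)
    (hneut : ∀ f ∈ F, NeutralSWF f) (π : Equiv.Perm A) (σ : Profile A m) :
    AbC F (σ.map fun r => π.symm.trans r) = AbC F σ := by
  ext f
  simp only [AbC, Set.mem_setOf_eq]
  constructor
  · rintro ⟨hfF, hmin⟩
    refine ⟨hfF, fun g hg => ?_⟩
    rw [← expDisagree_map f (hanon f hfF) (hneut f hfF) π σ,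
      ← expDisagree_map g (hanon g hg) (hneut g hg) π σ]
    exact hmin g hg
  · rintro ⟨hfF, hmin⟩
    refine ⟨hfF, fun g hg => ?_⟩
    rw [expDisagree_map f (hanon f hfF) (hneut f hfF) π σ,
      expDisagree_map g (hanon g hg) (hneut g hg) π σ]
    exact hmin g hg

/-- AbC preserves anonymity and neutrality: if every SWF in `F` is anonymous
and neutral, and `AbC(F,σ)` is a singleton for every profile `σ`, then the induced SWF
`f_{AbC}^F` is anonymous and neutral. -/
theorem abC_preserves_anonymity_neutrality {A : Type*} [Fintype A] {m : ℕ} (hm : 2 ≤ m)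
    (hcard : Fintype.card A = m) (F : Set (SWF A m))
    (hanon : ∀ f ∈ F, AnonymousSWF f) (hneut : ∀ f ∈ F, NeutralSWF f)
    (hsingle : ∀ σ : Profile A m, ∃ f, AbC F σ = {f}) :
    AnonymousSWF (inducedSWF AbC F) ∧ NeutralSWF (inducedSWF AbC F) := by
  have key : ∀ σ : Profile A m, AbC F σ = {(hsingle σ).choose} := fun σ => (hsingle σ).choose_spec
  have hmem : ∀ σ : Profile A m, (hsingle σ).choose ∈ F := by
    intro σ
    have h1 : (hsingle σ).choose ∈ ({(hsingle σ).choose} : Set (SWF A m)) := rfl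
    rw [← key σ] at h1
    exact h1.1
  have ind : ∀ σ : Profile A m, inducedSWF AbC F σ = (hsingle σ).choose σ := by
    intro σ
    simp only [inducedSWF]
    rw [dif_pos (hsingle σ)]
  constructor
  · intro σ σ' hp
    have hAbC : AbC F σ = AbC F σ' := AbC_congr_perm F hanon hp
    have hch : (hsingle σ).choose = (hsingle σ').choose := by
      exact Set.singleton_eq_singleton_iff.mp
        (((key σ).symm.trans hAbC).trans (key σ'))
    rw [ind σ, ind σ', ← hch]
    exact hanon _ (hmem σ) σ σ' hp
  · intro π σ
    have hAbC : AbC F (σ.map fun r => π.symm.trans r) = AbC F σ :=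
      AbC_congr_map F hanon hneut π σ
    have hch : (hsingle (σ.map fun r => π.symm.trans r)).choose = (hsingle σ).choose := by
      exact Set.singleton_eq_singleton_iff.mp
        (((key _).symm.trans hAbC).trans (key σ))
    rw [ind (σ.map fun r => π.symm.trans r), hch, ind σ]
    exact hneut _ (hmem σ) π σ

end
end
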